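/- Let A be a symmetric real n×n matrix with strictly positive entries, eigendecomposition A = QΛQᵀ with eigenvalues λ₁ ≥ ⋯ ≥ λₙ and orthonormal eigenvectors q₁,…,qₙ, and let d ≤ n−1. Define the n×(d+1) matrix X = [√λ₁ q₁ | √((−λ_{n−d+1})⁺) q_{n−d+1} | ⋯ | √((−λₙ)⁺) qₙ]. Then X minimizes ‖A − Y J Yᵀ‖_F² over all Y ∈ ℝ^{n×(d+1)}, where J = diag(1,−1,…,−1). -/

import Mathlib

open Matrix

def lorentzJ (d : ℕ) : Matrix (Fin (d + 1)) (Fin (d + 1)) ℝ :=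
  Matrix.diagonal (fun i => if i = 0 then (1 : ℝ) else -1)

namespace HydraAux

open Matrix

lemma sum_sq_eq_trace {n : ℕ} (M : Matrix (Fin n) (Fin n) ℝ) :
    ∑ i, ∑ j, (M i j)^2 = Matrix.trace (Mᵀ * M) := by
  simp only [Matrix.trace, Matrix.diag, Matrix.mul_apply, Matrix.transpose_apply]
  rw [Finset.sum_comm]
  simp [pow_two]

lemma sum_sq_diagonal {n : ℕ} (f : Fin n → ℝ) :
    ∑ i, ∑ j, (Matrix.diagonal f i j)^2 = ∑ i, (f i)^2 := by
  refine Finset.sum_congr rfl fun i _ => ?_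
  rw [Finset.sum_eq_single i]
  · simp
  · intro j _ hji
    rw [Matrix.diagonal_apply_ne f (Ne.symm hji)]
    simp
  · simp

lemma sum_sq_conj {n : ℕ} {Q : Matrix (Fin n) (Fin n) ℝ} (hQ : Qᵀ * Q = 1)
    (M : Matrix (Fin n) (Fin n) ℝ) :
    ∑ i, ∑ j, ((Q * M * Qᵀ) i j)^2 = ∑ i, ∑ j, (M i j)^2 := by
  rw [sum_sq_eq_trace, sum_sq_eq_trace M]
  have key : (Q * M * Qᵀ)ᵀ * (Q * M * Qᵀ) = Q * (Mᵀ * (Qᵀ * Q) * M) * Qᵀ := by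
    simp only [Matrix.transpose_mul, Matrix.transpose_transpose]
    noncomm_ring
  rw [key, hQ, Matrix.mul_one]
  rw [Matrix.trace_mul_cycle]
  rw [hQ, Matrix.one_mul]

lemma sum_sq_sub {n : ℕ} (A B : Matrix (Fin n) (Fin n) ℝ) :
    ∑ i, ∑ j, (A i j - B i j)^2
      = ∑ i, ∑ j, (A i j)^2 + ∑ i, ∑ j, (B i j)^2 - 2 * ∑ i, ∑ j, A i j * B i j := by
  have h : ∀ i : Fin n, ∀ j : Fin n, (A i j - B i j)^2
      = ((A i j)^2 + (B i j)^2) - 2*(A i j * B i j) := fun i j => by ring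
  simp_rw [h, Finset.sum_sub_distrib, Finset.sum_add_distrib, ← Finset.mul_sum]

lemma cross_eq_trace {n : ℕ} (A B : Matrix (Fin n) (Fin n) ℝ) (hB : Bᵀ = B) :
    ∑ i, ∑ j, A i j * B i j = Matrix.trace (A * B) := by
  simp only [Matrix.trace, Matrix.diag, Matrix.mul_apply]
  refine Finset.sum_congr rfl fun i _ => Finset.sum_congr rfl fun j _ => ?_
  have : B j i = B i j := by
    conv_lhs => rw [← hB]
    rw [Matrix.transpose_apply]
  rw [this]

lemma mul_diag_mul_transpose_apply {a b : ℕ} (M N : Matrix (Fin a) (Fin b) ℝ)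
    (v : Fin b → ℝ) (i k : Fin a) :
    (M * Matrix.diagonal v * Nᵀ) i k = ∑ j, M i j * v j * N k j := by
  rw [Matrix.mul_apply]
  refine Finset.sum_congr rfl fun j _ => ?_
  rw [Matrix.mul_diagonal, Matrix.transpose_apply]

lemma trace_conj_mul {n : ℕ} (Q U : Matrix (Fin n) (Fin n) ℝ) (μ β : Fin n → ℝ) :
    Matrix.trace ((Q * Matrix.diagonal μ * Qᵀ) * (U * Matrix.diagonal β * Uᵀ))
      = ∑ k, ∑ l, μ k * (β l * ((Qᵀ * U) k l)^2) := by
  set W := Qᵀ * U with hW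
  have h1 : (Q * Matrix.diagonal μ * Qᵀ) * (U * Matrix.diagonal β * Uᵀ)
      = Q * (Matrix.diagonal μ * W * Matrix.diagonal β * Uᵀ) := by
    rw [hW]; noncomm_ring
  rw [h1, Matrix.trace_mul_comm]
  have h2 : Matrix.diagonal μ * W * Matrix.diagonal β * Uᵀ * Q
      = Matrix.diagonal μ * (W * Matrix.diagonal β * Wᵀ) := by
    rw [hW, Matrix.transpose_mul, Matrix.transpose_transpose]; noncomm_ring
  rw [h2]
  simp only [Matrix.trace, Matrix.diag]
  have h3 : ∀ k, (Matrix.diagonal μ * (W * Matrix.diagonal β * Wᵀ)) k k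
      = μ k * (W * Matrix.diagonal β * Wᵀ) k k := fun k => by
    rw [Matrix.diagonal_mul]
  refine Finset.sum_congr rfl fun k _ => ?_
  rw [h3, mul_diag_mul_transpose_apply]
  rw [Finset.mul_sum]
  refine Finset.sum_congr rfl fun l _ => ?_
  ring

lemma sq_mem_doublyStochastic {n : ℕ} {W : Matrix (Fin n) (Fin n) ℝ}
    (h1 : W * Wᵀ = 1) (h2 : Wᵀ * W = 1) :
    (Matrix.of fun k l => (W k l)^2) ∈ doublyStochastic ℝ (Fin n) := by
  rw [mem_doublyStochastic_iff_sum]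
  refine ⟨fun i j => sq_nonneg _, fun i => ?_, fun j => ?_⟩
  · have h := congrFun (congrFun h1 i) i
    simp only [Matrix.mul_apply, Matrix.transpose_apply, Matrix.one_apply_eq] at h
    simpa [pow_two] using h
  · have h := congrFun (congrFun h2 j) j
    simp only [Matrix.mul_apply, Matrix.transpose_apply, Matrix.one_apply_eq] at h
    simpa [pow_two] using h

lemma cross_bound {n : ℕ} (μ g : Fin n → ℝ) (hμ : Antitone μ) (hg : Antitone g)
    (β : Fin n → ℝ) (π : Equiv.Perm (Fin n)) (hβ : ∀ l, β l = g (π l))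
    (S : Matrix (Fin n) (Fin n) ℝ) (hS : S ∈ doublyStochastic ℝ (Fin n)) :
    ∑ k, ∑ l, μ k * (β l * S k l) ≤ ∑ k, μ k * g k := by
  obtain ⟨w, hw0, hw1, hwS⟩ := exists_eq_sum_perm_of_mem_doublyStochastic hS
  have hmono : Monovary μ g := by
    intro i j hij
    rcases le_or_gt j i with h | h
    · exact hμ h
    · exact absurd (hg h.le) (not_le.mpr hij)
  have hperm : ∀ σ : Equiv.Perm (Fin n), ∑ k, μ k * β (σ k) ≤ ∑ k, μ k * g k := by
    intro σ
    have h : ∀ k, μ k * β (σ k) = μ k * g ((σ.trans π) k) := fun k => by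
      rw [hβ]; rfl
    simp_rw [h]
    exact hmono.sum_mul_comp_perm_le_sum_mul
  have hSval : ∀ k l, S k l
      = ∑ σ : Equiv.Perm (Fin n), w σ * (if σ k = l then 1 else 0) := by
    intro k l
    have h := congrFun (congrFun hwS k) l
    rw [Matrix.sum_apply] at h
    rw [← h]
    refine Finset.sum_congr rfl fun σ _ => ?_
    rw [Matrix.smul_apply, smul_eq_mul]
    congr 1
    simp [Equiv.Perm.permMatrix, PEquiv.toMatrix_apply, Equiv.toPEquiv_apply]
  have e1 : ∀ (k : Fin n) (σ : Equiv.Perm (Fin n)),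
      ∑ l, μ k * (β l * (w σ * (if σ k = l then 1 else 0)))
        = w σ * (μ k * β (σ k)) := by
    intro k σ
    rw [Finset.sum_eq_single (σ k)]
    · rw [if_pos rfl]; ring
    · intro l _ hl
      rw [if_neg (fun h => hl h.symm)]
      ring
    · simp
  calc ∑ k, ∑ l, μ k * (β l * S k l)
      = ∑ k, ∑ l, ∑ σ : Equiv.Perm (Fin n),
          μ k * (β l * (w σ * (if σ k = l then 1 else 0))) := by
        simp_rw [hSval, Finset.mul_sum]
    _ = ∑ k, ∑ σ : Equiv.Perm (Fin n), ∑ l,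
          μ k * (β l * (w σ * (if σ k = l then 1 else 0))) :=
        Finset.sum_congr rfl fun k _ => Finset.sum_comm
    _ = ∑ k, ∑ σ : Equiv.Perm (Fin n), w σ * (μ k * β (σ k)) :=
        Finset.sum_congr rfl fun k _ => Finset.sum_congr rfl fun σ _ => e1 k σ
    _ = ∑ σ : Equiv.Perm (Fin n), ∑ k, w σ * (μ k * β (σ k)) := Finset.sum_comm
    _ = ∑ σ : Equiv.Perm (Fin n), w σ * ∑ k, μ k * β (σ k) := by
        refine Finset.sum_congr rfl fun σ _ => ?_
        rw [Finset.mul_sum]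
    _ ≤ ∑ σ : Equiv.Perm (Fin n), w σ * ∑ k, μ k * g k :=
        Finset.sum_le_sum fun σ _ => mul_le_mul_of_nonneg_left (hperm σ) (hw0 σ)
    _ = ∑ k, μ k * g k := by rw [← Finset.sum_mul, hw1, one_mul]

lemma inertia_pos {n d : ℕ} (β : Fin n → ℝ) (P : Matrix (Fin n) (Fin (d+1)) ℝ)
    (hR : ∀ i k, ∑ j, (if j = 0 then (1:ℝ) else -1) * P i j * P k j
      = if i = k then β i else 0)
    {i k : Fin n} (hik : i ≠ k) (hi : 0 < β i) (hk : 0 < β k) : False := by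
  obtain ⟨a, b, hab, h0⟩ : ∃ a b : ℝ, ¬(a = 0 ∧ b = 0) ∧ a * P i 0 + b * P k 0 = 0 := by
    by_cases h : P i 0 = 0 ∧ P k 0 = 0
    · exact ⟨1, 0, by simp, by simp [h.1, h.2]⟩
    · exact ⟨P k 0, -(P i 0), fun hc => h ⟨neg_eq_zero.mp hc.2, hc.1⟩, by ring⟩
  set w : Fin (d+1) → ℝ := fun j => a * P i j + b * P k j with hw
  have e1 := hR i i; rw [if_pos rfl] at e1
  have e2 := hR i k; rw [if_neg hik] at e2
  have e3 := hR k k; rw [if_pos rfl] at e3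
  have hT : ∑ j, (if j = 0 then (1:ℝ) else -1) * (w j)^2
      = a^2 * β i + b^2 * β k := by
    calc ∑ j, (if j = 0 then (1:ℝ) else -1) * (w j)^2
        = ∑ j, (a^2 * ((if j = 0 then (1:ℝ) else -1) * P i j * P i j)
            + ((2*(a*b)) * ((if j = 0 then (1:ℝ) else -1) * P i j * P k j)
            + b^2 * ((if j = 0 then (1:ℝ) else -1) * P k j * P k j))) := by
          refine Finset.sum_congr rfl fun j _ => ?_
          simp only [hw]
          ring
      _ = a^2 * (∑ j, (if j = 0 then (1:ℝ) else -1) * P i j * P i j)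
            + ((2*(a*b)) * (∑ j, (if j = 0 then (1:ℝ) else -1) * P i j * P k j)
            + b^2 * (∑ j, (if j = 0 then (1:ℝ) else -1) * P k j * P k j)) := by
          rw [Finset.sum_add_distrib, Finset.sum_add_distrib,
            ← Finset.mul_sum, ← Finset.mul_sum, ← Finset.mul_sum]
      _ = a^2 * β i + b^2 * β k := by rw [e1, e2, e3]; ring
  have hpos : 0 < a^2 * β i + b^2 * β k := by
    rcases not_and_or.mp hab with ha | hb
    · have h2 : 0 < a^2 := lt_of_le_of_ne (sq_nonneg a) (Ne.symm (pow_ne_zero 2 ha))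
      nlinarith [sq_nonneg b]
    · have h2 : 0 < b^2 := lt_of_le_of_ne (sq_nonneg b) (Ne.symm (pow_ne_zero 2 hb))
      nlinarith [sq_nonneg a]
  have hnonpos : ∑ j, (if j = 0 then (1:ℝ) else -1) * (w j)^2 ≤ 0 := by
    apply Finset.sum_nonpos
    intro j _
    by_cases hj : j = 0
    · subst hj
      rw [if_pos rfl, one_mul]
      have hw0 : w 0 = 0 := h0
      rw [hw0]
      simp
    · rw [if_neg hj]
      nlinarith [sq_nonneg (w j)]
  rw [hT] at hnonpos
  linarith

lemma inertia_neg {n d : ℕ} (β : Fin n → ℝ) (P : Matrix (Fin n) (Fin (d+1)) ℝ)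
    (hR : ∀ i k, ∑ j, (if j = 0 then (1:ℝ) else -1) * P i j * P k j
      = if i = k then β i else 0)
    (ι : Fin (d+1) → Fin n) (hι : Function.Injective ι)
    (hneg : ∀ t, β (ι t) < 0) : False := by
  obtain ⟨c, hc, hMc⟩ : ∃ c : Fin (d+1) → ℝ, c ≠ 0 ∧
      (Matrix.of fun (j : Fin (d+1)) (t : Fin (d+1)) =>
        if j = 0 then (0:ℝ) else P (ι t) j) *ᵥ c = 0 := by
    apply Matrix.exists_mulVec_eq_zero_iff.mpr
    apply Matrix.det_eq_zero_of_row_eq_zero 0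
    intro t
    simp
  have hker : ∀ j : Fin (d+1), j ≠ 0 → ∑ t, P (ι t) j * c t = 0 := by
    intro j hj
    have h := congrFun hMc j
    simpa [Matrix.mulVec, dotProduct, hj] using h
  set w : Fin (d+1) → ℝ := fun j => ∑ t, c t * P (ι t) j with hwdef
  have hw0 : ∀ j, j ≠ 0 → w j = 0 := by
    intro j hj
    simp only [hwdef]
    rw [← hker j hj]
    exact Finset.sum_congr rfl fun t _ => mul_comm _ _
  have hT1 : ∑ j, (if j = 0 then (1:ℝ) else -1) * (w j)^2 = (w 0)^2 := by
    rw [Finset.sum_eq_single 0]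
    · rw [if_pos rfl, one_mul]
    · intro j _ hj
      rw [hw0 j hj]
      simp
    · simp
  have hT2 : ∑ j, (if j = 0 then (1:ℝ) else -1) * (w j)^2
      = ∑ t, (c t)^2 * β (ι t) := by
    calc ∑ j, (if j = 0 then (1:ℝ) else -1) * (w j)^2
        = ∑ j, ∑ t, ∑ s, (c t * c s) *
            ((if j = 0 then (1:ℝ) else -1) * P (ι t) j * P (ι s) j) := by
          refine Finset.sum_congr rfl fun j _ => ?_
          rw [pow_two]
          simp only [hwdef]
          rw [Finset.sum_mul_sum, Finset.mul_sum]
          refine Finset.sum_congr rfl fun t _ => ?_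
          rw [Finset.mul_sum]
          refine Finset.sum_congr rfl fun s _ => ?_
          ring
      _ = ∑ t, ∑ s, (c t * c s) *
            (∑ j, (if j = 0 then (1:ℝ) else -1) * P (ι t) j * P (ι s) j) := by
          rw [Finset.sum_comm]
          refine Finset.sum_congr rfl fun t _ => ?_
          rw [Finset.sum_comm]
          refine Finset.sum_congr rfl fun s _ => ?_
          rw [Finset.mul_sum]
      _ = ∑ t, ∑ s, (c t * c s) * (if t = s then β (ι t) else 0) := by
          refine Finset.sum_congr rfl fun t _ => Finset.sum_congr rfl fun s _ => ?_
          rw [hR (ι t) (ι s)]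
          congr 1
          simp [hι.eq_iff]
      _ = ∑ t, (c t)^2 * β (ι t) := by
          refine Finset.sum_congr rfl fun t _ => ?_
          rw [Finset.sum_eq_single t]
          · rw [if_pos rfl, pow_two]
          · intro s _ hs
            rw [if_neg (fun h => hs h.symm), mul_zero]
          · simp
  have hlt : ∑ t, (c t)^2 * β (ι t) < 0 := by
    obtain ⟨t0, ht0⟩ := Function.ne_iff.mp hc
    simp only [Pi.zero_apply] at ht0
    have h1 : ∀ t ∈ Finset.univ, (c t)^2 * β (ι t) ≤ (fun _ : Fin (d+1) => (0:ℝ)) t := by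
      intro t _
      show (c t)^2 * β (ι t) ≤ 0
      nlinarith [sq_nonneg (c t), hneg t]
    have h2 : (c t0)^2 * β (ι t0) < 0 := by
      have hcp : 0 < (c t0)^2 :=
        lt_of_le_of_ne (sq_nonneg _) (Ne.symm (pow_ne_zero 2 ht0))
      nlinarith [hneg t0]
    calc ∑ t, (c t)^2 * β (ι t)
        < ∑ _t : Fin (d+1), (0:ℝ) :=
          Finset.sum_lt_sum h1 ⟨t0, Finset.mem_univ t0, h2⟩
      _ = 0 := by simp
  rw [hT1] at hT2
  nlinarith [sq_nonneg (w 0)]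

end HydraAux


set_option maxHeartbeats 3200000 in
open HydraAux in
theorem hydra_minimizes_strain {n d : ℕ} (hn : 0 < n) (hd : d ≤ n - 1)
    (A : Matrix (Fin n) (Fin n) ℝ) (hApos : ∀ i j, 0 < A i j)
    (Q : Matrix (Fin n) (Fin n) ℝ) (hQ : Qᵀ * Q = 1)
    (μ : Fin n → ℝ) (hμ : Antitone μ)
    (hA : A = Q * Matrix.diagonal μ * Qᵀ)
    (X : Matrix (Fin n) (Fin (d + 1)) ℝ)
    (hX : ∀ (i : Fin n) (j : Fin (d + 1)),
      X i j =
        if j = 0 then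
          Real.sqrt (μ ⟨0, hn⟩) * Q i ⟨0, hn⟩
        else
          Real.sqrt (max (-(μ ⟨n - d - 1 + j.val, by omega⟩)) 0) *
            Q i ⟨n - d - 1 + j.val, by omega⟩) :
    ∀ Y : Matrix (Fin n) (Fin (d + 1)) ℝ,
      ∑ i, ∑ j, (A i j - (X * lorentzJ d * Xᵀ) i j) ^ 2 ≤
        ∑ i, ∑ j, (A i j - (Y * lorentzJ d * Yᵀ) i j) ^ 2 := by
  intro Y
  have hQ' : Q * Qᵀ = 1 := mul_eq_one_comm.mp hQ
  -- the top eigenvalue is positive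
  have hμ0 : 0 < μ ⟨0, hn⟩ := by
    have h1 : Matrix.trace A = ∑ k, μ k := by
      rw [hA, Matrix.trace_mul_cycle, hQ, Matrix.one_mul, Matrix.trace_diagonal]
    have h2 : 0 < Matrix.trace A := by
      refine Finset.sum_pos (fun i _ => hApos i i) ⟨⟨0, hn⟩, Finset.mem_univ _⟩
    rw [h1] at h2
    by_contra hcon
    push_neg at hcon
    have h3 : ∀ k ∈ Finset.univ, μ k ≤ (0:ℝ) := fun k _ =>
      le_trans (hμ (show (⟨0, hn⟩ : Fin n) ≤ k by simp [Fin.le_def])) hcon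
    have := Finset.sum_nonpos h3
    linarith
  ---- X side ----
  have hjlt : ∀ j : Fin (d+1), n - d - 1 + j.val < n := fun j => by
    have := j.isLt; omega
  set suppIdx : Fin (d+1) → Fin n :=
    fun j => if j = 0 then ⟨0, hn⟩ else ⟨n - d - 1 + j.val, hjlt j⟩ with hsuppIdx
  set co : Fin (d+1) → ℝ := fun j =>
    if j = 0 then Real.sqrt (μ ⟨0, hn⟩) else Real.sqrt (max (-(μ (suppIdx j))) 0) with hco
  set C : Matrix (Fin n) (Fin (d+1)) ℝ :=
    Matrix.of (fun k j => if k = suppIdx j then co j else 0) with hC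
  set ν : Fin n → ℝ := fun k =>
    if (k:ℕ) = 0 then μ ⟨0, hn⟩ else
      if n - d - 1 < (k:ℕ) then -(max (-(μ k)) 0) else 0 with hν
  have hsupp0 : suppIdx 0 = ⟨0, hn⟩ := by rw [hsuppIdx]; simp
  have hsuppne : ∀ j : Fin (d+1), j ≠ 0 → suppIdx j = ⟨n - d - 1 + j.val, hjlt j⟩ := by
    intro j hj; rw [hsuppIdx]; simp [hj]
  have hco0 : co 0 = Real.sqrt (μ ⟨0, hn⟩) := by rw [hco]; simp
  have hconej : ∀ j, j ≠ 0 → co j = Real.sqrt (max (-(μ (suppIdx j))) 0) := by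
    intro j hj; rw [hco]; simp [hj]
  have hXQC : X = Q * C := by
    ext i j
    rw [Matrix.mul_apply, Finset.sum_eq_single (suppIdx j)]
    · rw [hC]
      simp only [Matrix.of_apply, eq_self_iff_true, if_true]
      rw [hX i j]
      by_cases hj : j = 0
      · subst hj
        rw [hsupp0, hco0]
        simp [mul_comm]
      · have hcoj : co j = Real.sqrt (max (-(μ ⟨n - d - 1 + j.val, hjlt j⟩)) 0) := by
          rw [hconej j hj, hsuppne j hj]
        rw [if_neg hj, hcoj, hsuppne j hj]
        ring
    · intro k _ hk
      rw [hC]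
      simp only [Matrix.of_apply, if_neg hk, mul_zero]
    · simp
  have hCJC : C * lorentzJ d * Cᵀ = Matrix.diagonal ν := by
    ext k l
    rw [show lorentzJ d = Matrix.diagonal (fun j : Fin (d+1) =>
      if j = 0 then (1:ℝ) else -1) from rfl]
    rw [mul_diag_mul_transpose_apply]
    by_cases hkl : k = l
    · subst hkl
      rw [Matrix.diagonal_apply_eq]
      by_cases hk0 : (k:ℕ) = 0
      · have hkz : k = (⟨0, hn⟩ : Fin n) := Fin.ext hk0
        have hν0 : ν k = μ ⟨0, hn⟩ := by rw [hν]; simp [hk0]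
        rw [hν0, Finset.sum_eq_single 0]
        · have h1 : C k 0 = co 0 := by
            rw [hC, hkz]
            simp [hsupp0]
          rw [h1, if_pos rfl, hco0, mul_one]
          exact Real.mul_self_sqrt hμ0.le
        · intro j _ hj
          have hjv : j.val ≠ 0 := fun hh => hj (Fin.ext hh)
          have hkne : k ≠ suppIdx j := by
            rw [hsuppne j hj]
            intro h
            have hv := congrArg Fin.val h
            simp only [] at hv
            omega
          have h2 : C k j = 0 := by rw [hC]; simp [hkne]
          rw [h2]; ring
        · simp
      · by_cases hkd : n - d - 1 < (k:ℕ)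
        · have hj0lt : (k:ℕ) - (n - d - 1) < d + 1 := by have := k.isLt; omega
          set j0 : Fin (d+1) := ⟨(k:ℕ) - (n - d - 1), hj0lt⟩ with hj0
          have hj0ne : j0 ≠ 0 := by
            intro h
            have := congrArg Fin.val h
            simp [hj0] at this
            omega
          have hsuppj0 : suppIdx j0 = k := by
            rw [hsuppne j0 hj0ne]
            apply Fin.ext
            simp [hj0]
            omega
          have hν1 : ν k = -(max (-(μ k)) 0) := by rw [hν]; simp [hk0, hkd]
          rw [hν1, Finset.sum_eq_single j0]
          · have h1 : C k j0 = Real.sqrt (max (-(μ k)) 0) := by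
              rw [hC]
              simp only [Matrix.of_apply, if_pos hsuppj0.symm]
              rw [hconej j0 hj0ne, hsuppj0]
              
            rw [h1, if_neg hj0ne]
            have h2 := Real.mul_self_sqrt (le_max_right (-(μ k)) 0)
            nlinarith [h2]
          · intro j _ hj
            have hkne : k ≠ suppIdx j := by
              intro h
              by_cases hjz : j = 0
              · rw [hjz, hsupp0] at h
                exact hk0 (congrArg Fin.val h)
              · rw [hsuppne j hjz] at h
                have hv := congrArg Fin.val h
                simp only [] at hv
                apply hj
                apply Fin.ext
                simp [hj0]
                omega
            have h2 : C k j = 0 := by rw [hC]; simp [hkne]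
            rw [h2]; ring
          · simp
        · have hν2 : ν k = 0 := by rw [hν]; simp [hk0, hkd]
          rw [hν2]
          refine Finset.sum_eq_zero fun j _ => ?_
          have hkne : k ≠ suppIdx j := by
            intro h
            by_cases hjz : j = 0
            · rw [hjz, hsupp0] at h
              exact hk0 (congrArg Fin.val h)
            · rw [hsuppne j hjz] at h
              have hv := congrArg Fin.val h
              have hjv : j.val ≠ 0 := fun hh => hjz (Fin.ext hh)
              simp only [] at hv
              omega
          have h2 : C k j = 0 := by rw [hC]; simp [hkne]
          rw [h2]; ring
    · rw [Matrix.diagonal_apply_ne _ hkl]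
      refine Finset.sum_eq_zero fun j _ => ?_
      by_cases hk : k = suppIdx j
      · have hl : l ≠ suppIdx j := fun h => hkl (hk.trans h.symm)
        rw [hC]
        simp only [Matrix.of_apply, if_neg hl, mul_zero]
      · rw [hC]
        simp only [Matrix.of_apply, if_neg hk, zero_mul]
  have hXJXQ : X * lorentzJ d * Xᵀ = Q * Matrix.diagonal ν * Qᵀ := by
    rw [hXQC, ← hCJC]
    simp only [Matrix.transpose_mul, Matrix.mul_assoc]
  have hLHS : ∑ i, ∑ j, (A i j - (X * lorentzJ d * Xᵀ) i j) ^ 2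
      = ∑ k, (μ k - ν k)^2 := by
    have hmat : A - X * lorentzJ d * Xᵀ
        = Q * Matrix.diagonal (fun k => μ k - ν k) * Qᵀ := by
      rw [hA, hXJXQ]
      rw [← Matrix.diagonal_sub, Matrix.mul_sub, Matrix.sub_mul]
    calc ∑ i, ∑ j, (A i j - (X * lorentzJ d * Xᵀ) i j) ^ 2
        = ∑ i, ∑ j, ((A - X * lorentzJ d * Xᵀ) i j) ^ 2 := by
          simp [Matrix.sub_apply]
      _ = ∑ k, (μ k - ν k)^2 := by
          rw [hmat, sum_sq_conj hQ, sum_sq_diagonal]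
  ---- Y side ----
  set B := Y * lorentzJ d * Yᵀ with hBdef
  have hJT : (lorentzJ d)ᵀ = lorentzJ d := Matrix.diagonal_transpose _
  have hBsymm : Bᵀ = B := by
    rw [hBdef]
    simp only [Matrix.transpose_mul, Matrix.transpose_transpose, hJT, Matrix.mul_assoc]
  have hBH : B.IsHermitian := by
    unfold Matrix.IsHermitian
    rw [Matrix.conjTranspose_eq_transpose_of_trivial]
    exact hBsymm
  obtain ⟨U, β, hUUt, hdiag⟩ : ∃ (U : Matrix (Fin n) (Fin n) ℝ) (β : Fin n → ℝ),
      U * Uᵀ = 1 ∧ Uᵀ * B * U = Matrix.diagonal β := by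
    refine ⟨↑(hBH.eigenvectorUnitary), hBH.eigenvalues, ?_, ?_⟩
    · have hu2 := (Unitary.mem_iff.mp hBH.eigenvectorUnitary.2).2
      rwa [Matrix.star_eq_conjTranspose,
        Matrix.conjTranspose_eq_transpose_of_trivial] at hu2
    · have hsd := hBH.conjStarAlgAut_star_eigenvectorUnitary
      rw [Unitary.conjStarAlgAut_apply, Unitary.coe_star, star_star, Matrix.star_eq_conjTranspose,
        Matrix.conjTranspose_eq_transpose_of_trivial] at hsd
      rw [show (RCLike.ofReal ∘ hBH.eigenvalues : Fin n → ℝ) = hBH.eigenvalues from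
        funext fun x => by simp [RCLike.ofReal_real_eq_id]] at hsd
      exact hsd
  have hUtU : Uᵀ * U = 1 := mul_eq_one_comm.mp hUUt
  have hBspec : B = U * Matrix.diagonal β * Uᵀ := by
    rw [← hdiag]
    calc B = (U * Uᵀ) * B * (U * Uᵀ) := by
          rw [hUUt, Matrix.one_mul, Matrix.mul_one]
      _ = U * (Uᵀ * B * U) * Uᵀ := by simp only [Matrix.mul_assoc]
  set P : Matrix (Fin n) (Fin (d+1)) ℝ := Uᵀ * Y with hPdef
  have hPJP : Matrix.diagonal β = P * lorentzJ d * Pᵀ := by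
    rw [← hdiag, hBdef, hPdef]
    simp only [Matrix.transpose_mul, Matrix.transpose_transpose, Matrix.mul_assoc]
  have hR : ∀ i k, ∑ j, (if j = 0 then (1:ℝ) else -1) * P i j * P k j
      = if i = k then β i else 0 := by
    intro i k
    have h := congrFun (congrFun hPJP i) k
    rw [Matrix.diagonal_apply] at h
    rw [show lorentzJ d = Matrix.diagonal (fun j : Fin (d+1) =>
      if j = 0 then (1:ℝ) else -1) from rfl] at h
    rw [mul_diag_mul_transpose_apply] at h
    rw [h]
    exact Finset.sum_congr rfl fun j _ => by ring
  ---- sorted eigenvalues of B ----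
  set e : Equiv.Perm (Fin n) := Equiv.trans (Fin.revPerm) (Tuple.sort β) with he
  set g : Fin n → ℝ := fun k => β (e k) with hgdef
  have hg : Antitone g := by
    intro i j hij
    have h := Tuple.monotone_sort β (show Fin.rev j ≤ Fin.rev i from Fin.rev_le_rev.mpr hij)
    simpa [hgdef, he] using h
  have hβg : ∀ l, β l = g (e.symm l) := fun l => by
    rw [hgdef]
    simp
  have hgpos : ∀ k : Fin n, k ≠ ⟨0, hn⟩ → g k ≤ 0 := by
    intro k hk
    by_contra hcon
    push_neg at hcon
    have h0 : 0 < g ⟨0, hn⟩ :=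
      lt_of_lt_of_le hcon (hg (show (⟨0, hn⟩ : Fin n) ≤ k by simp [Fin.le_def]))
    exact inertia_pos β P hR
      (show e ⟨0, hn⟩ ≠ e k from fun h => hk (e.injective h).symm) h0 hcon
  have hgneg : ∀ k : Fin n, (k:ℕ) ≤ n - d - 1 → 0 ≤ g k := by
    intro k hk
    by_contra hcon
    push_neg at hcon
    have hlt : ∀ t : Fin (d+1), (k:ℕ) + t.val < n := fun t => by
      have := t.isLt; have := k.isLt; omega
    refine inertia_neg β P hR (fun t => e ⟨(k:ℕ) + t.val, hlt t⟩) ?_ ?_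
    · intro t s hts
      have h2 := e.injective hts
      have h3 : (k:ℕ) + t.val = (k:ℕ) + s.val := congrArg Fin.val h2
      exact Fin.ext (by omega)
    · intro t
      have hle : g ⟨(k:ℕ) + t.val, hlt t⟩ ≤ g k := hg (by simp [Fin.le_def])
      exact lt_of_le_of_lt hle hcon
  ---- Hoffman–Wielandt style bound ----
  set W : Matrix (Fin n) (Fin n) ℝ := Qᵀ * U with hW
  have hWWt : W * Wᵀ = 1 := by
    have h1 : W * Wᵀ = Qᵀ * ((U * Uᵀ) * Q) := by
      rw [hW]
      simp only [Matrix.transpose_mul, Matrix.transpose_transpose, Matrix.mul_assoc]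
    rw [h1, hUUt, Matrix.one_mul, hQ]
  have hWtW : Wᵀ * W = 1 := mul_eq_one_comm.mp hWWt
  have hcross_eq : ∑ i, ∑ j, A i j * B i j
      = ∑ k, ∑ l, μ k * (β l * ((W k l)^2)) := by
    rw [cross_eq_trace A B hBsymm]
    conv_lhs => rw [hA, hBspec]
    rw [trace_conj_mul]
  have hcross_le : ∑ k, ∑ l, μ k * (β l * ((W k l)^2)) ≤ ∑ k, μ k * g k := by
    have h := cross_bound μ g hμ hg β e.symm hβg
      (Matrix.of fun k l => (W k l)^2) (sq_mem_doublyStochastic hWWt hWtW)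
    exact h
  have hsumA : ∑ i, ∑ j, (A i j)^2 = ∑ k, (μ k)^2 := by
    rw [hA, sum_sq_conj hQ, sum_sq_diagonal]
  have hsumB : ∑ i, ∑ j, (B i j)^2 = ∑ k, (β k)^2 := by
    rw [hBspec, sum_sq_conj hUtU, sum_sq_diagonal]
  have hβg2 : ∑ k, (β k)^2 = ∑ k, (g k)^2 := by
    calc ∑ k, (β k)^2 = ∑ k, (g (e.symm k))^2 :=
          Finset.sum_congr rfl fun k _ => by rw [hβg]
      _ = ∑ k, (g k)^2 := Equiv.sum_comp e.symm (fun k => (g k)^2)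
  have hRHS : ∑ k, (μ k - g k)^2 ≤ ∑ i, ∑ j, (A i j - B i j)^2 := by
    rw [sum_sq_sub]
    have hexp : ∑ k, (μ k - g k)^2
        = ∑ k, (μ k)^2 + ∑ k, (g k)^2 - 2 * ∑ k, μ k * g k := by
      have h : ∀ k : Fin n, (μ k - g k)^2
          = ((μ k)^2 + (g k)^2) - 2*(μ k * g k) := fun k => by ring
      simp_rw [h, Finset.sum_sub_distrib, Finset.sum_add_distrib, ← Finset.mul_sum]
    have hABle : ∑ i, ∑ j, A i j * B i j ≤ ∑ k, μ k * g k := by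
      rw [hcross_eq]; exact hcross_le
    rw [hexp, hsumA, hsumB, hβg2]
    linarith
  ---- pointwise comparison ----
  have hpoint : ∑ k, (μ k - ν k)^2 ≤ ∑ k, (μ k - g k)^2 := by
    refine Finset.sum_le_sum fun k _ => ?_
    by_cases hk0 : (k:ℕ) = 0
    · have hkz : k = (⟨0, hn⟩ : Fin n) := Fin.ext hk0
      have hν0 : ν k = μ ⟨0, hn⟩ := by rw [hν]; simp [hk0]
      rw [hν0, hkz]
      simp [sq_nonneg]
    · have hkne : k ≠ ⟨0, hn⟩ := fun h => hk0 (congrArg Fin.val h)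
      have hgk0 : g k ≤ 0 := hgpos k hkne
      by_cases hkd : n - d - 1 < (k:ℕ)
      · have hν1 : ν k = -(max (-(μ k)) 0) := by rw [hν]; simp [hk0, hkd]
        rw [hν1]
        rcases le_or_gt 0 (μ k) with hm | hm
        · have hmx : max (-(μ k)) 0 = 0 := max_eq_right (neg_nonpos.mpr hm)
          rw [hmx]
          nlinarith
        · have hmx : max (-(μ k)) 0 = -(μ k) := max_eq_left (neg_pos.mpr hm).le
          rw [hmx]
          nlinarith [sq_nonneg (μ k - g k)]
      · have hν2 : ν k = 0 := by rw [hν]; simp [hk0, hkd]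
        have hgk : g k = 0 := le_antisymm hgk0 (hgneg k (by omega))
        rw [hν2, hgk]
  calc ∑ i, ∑ j, (A i j - (X * lorentzJ d * Xᵀ) i j) ^ 2
      = ∑ k, (μ k - ν k)^2 := hLHS
    _ ≤ ∑ k, (μ k - g k)^2 := hpoint
    _ ≤ ∑ i, ∑ j, (A i j - B i j) ^ 2 := hRHS
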